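/- For every x > 0, G(x) > F(x), where G(x) = (1/2)(1 - (1/2)·(1-Φ(x^{-1/2}))/(1-Φ(√2))) and F(x) = (1/2)(1 - 3x²). -/

import Mathlib

open Real

/-- The standard normal cumulative distribution function. -/
noncomputable def normalCDF (x : ℝ) : ℝ :=
  ∫ t in Set.Iic x, (Real.sqrt (2 * Real.pi))⁻¹ * Real.exp (-t ^ 2 / 2)

/-- The standard normal density. -/
noncomputable def normalPDF (x : ℝ) : ℝ :=
  (Real.sqrt (2 * Real.pi))⁻¹ * Real.exp (-x ^ 2 / 2)

namespace Stmt3Aux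

open MeasureTheory Set


noncomputable def gg (s : ℝ) : ℝ := Real.exp (-s^2/2)

lemma gg_int : Integrable gg := by
  have h := integrable_exp_neg_mul_sq (b := 1/2) (by norm_num)
  convert h using 2 with s
  unfold gg; ring_nf

lemma gg_total : ∫ s, gg s = Real.sqrt (2*π) := by
  have h := integral_gaussian (1/2)
  have : ∫ s, gg s = ∫ x : ℝ, exp (-(1/2) * x^2) := by
    congr 1; funext s; unfold gg; ring_nf
  rw [this, h]; rw [show π/(1/2) = 2*π by ring]

lemma gg_nonneg (s : ℝ) : 0 ≤ gg s := (Real.exp_pos _).le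

lemma I_mono {a b : ℝ} (h : a ≤ b) : ∫ s in Ioi b, gg s ≤ ∫ s in Ioi a, gg s := by
  apply setIntegral_mono_set gg_int.integrableOn
  · exact Filter.Eventually.of_forall fun s => gg_nonneg s
  · exact HasSubset.Subset.eventuallyLE (Ioi_subset_Ioi h)

lemma I_split {a b : ℝ} (h : a ≤ b) :
    ∫ s in Ioi a, gg s = (∫ s in Ioc a b, gg s) + ∫ s in Ioi b, gg s := by
  rw [← setIntegral_union (Ioc_disjoint_Ioi le_rfl) measurableSet_Ioi
      gg_int.integrableOn gg_int.integrableOn, Ioc_union_Ioi_eq_Ioi h]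

lemma I_nonneg (a : ℝ) : 0 ≤ ∫ s in Ioi a, gg s :=
  setIntegral_nonneg measurableSet_Ioi fun s _ => gg_nonneg s

lemma I_le_total (a : ℝ) : ∫ s in Ioi a, gg s ≤ Real.sqrt (2*π) := by
  rw [← gg_total]
  exact setIntegral_le_integral gg_int (Filter.Eventually.of_forall fun s => gg_nonneg s)

set_option maxHeartbeats 1000000 in
lemma mill {b : ℝ} (hb : 0 < b) : ∫ s in Ioi b, gg s ≤ Real.exp (-b^2/2) * b⁻¹ := by
  have h1 : ∀ s ∈ Ioi b, gg s ≤ Real.exp (b^2/2) * Real.exp (-(b*s)) := by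
    intro s hs
    simp only [gg]
    rw [← Real.exp_add]
    apply Real.exp_le_exp.2
    nlinarith [sq_nonneg (s - b), (mem_Ioi.mp hs).le]
  have h2 : (∫ s in Ioi b, Real.exp (b^2/2) * Real.exp (-(b*s)))
      = Real.exp (-b^2/2) * b⁻¹ := by
    rw [integral_const_mul]
    have h3 : (∫ s in Ioi b, Real.exp (-(b*s))) = b⁻¹ * Real.exp (-(b*b)) := by
      have := integral_comp_mul_left_Ioi (fun x => Real.exp (-x)) b hb
      simp only [smul_eq_mul] at this
      rw [this, integral_exp_neg_Ioi]
    rw [h3]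
    calc Real.exp (b^2/2) * (b⁻¹ * Real.exp (-(b*b)))
        = Real.exp (b^2/2 + -(b*b)) * b⁻¹ := by rw [Real.exp_add]; ring
      _ = Real.exp (-b^2/2) * b⁻¹ := by rw [show b^2/2 + -(b*b) = -b^2/2 by ring]
  rw [← h2]
  have hint : IntegrableOn (fun s => Real.exp (b^2/2) * Real.exp (-(b*s))) (Ioi b) := by
    have := (exp_neg_integrableOn_Ioi b hb).const_mul (Real.exp (b^2/2))
    simp only [neg_mul] at this; exact this
  exact setIntegral_mono_on gg_int.integrableOn hint measurableSet_Ioi h1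

lemma int_poly_Ioc (d a b E c0 c1 c2 c3 c4 c5 c6 : ℝ) (hab : a ≤ b) :
    ∫ s in Ioc a b, E*(c0 + c1*(s-d) + c2*(s-d)^2 + c3*(s-d)^3 + c4*(s-d)^4 + c5*(s-d)^5
      + c6*(s-d)^6)
    = E*(c0*((b-d)-(a-d)) + c1*((b-d)^2-(a-d)^2)/2 + c2*((b-d)^3-(a-d)^3)/3
      + c3*((b-d)^4-(a-d)^4)/4 + c4*((b-d)^5-(a-d)^5)/5 + c5*((b-d)^6-(a-d)^6)/6
      + c6*((b-d)^7-(a-d)^7)/7) := by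
  rw [← intervalIntegral.integral_of_le hab]
  have hF : ∀ s ∈ uIcc a b, HasDerivAt
      (fun x => E*(c0*(x-d) + c1*(x-d)^2/2 + c2*(x-d)^3/3 + c3*(x-d)^4/4 + c4*(x-d)^5/5
        + c5*(x-d)^6/6 + c6*(x-d)^7/7))
      (E*(c0 + c1*(s-d) + c2*(s-d)^2 + c3*(s-d)^3 + c4*(s-d)^4 + c5*(s-d)^5 + c6*(s-d)^6)) s := by
    intro s _
    have hid : HasDerivAt (fun x : ℝ => x - d) 1 s := (hasDerivAt_id s).sub_const d
    have h1 := hid.fun_pow 2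
    have h2 := hid.fun_pow 3
    have h3 := hid.fun_pow 4
    have h4 := hid.fun_pow 5
    have h5 := hid.fun_pow 6
    have h6 := hid.fun_pow 7
    have := ((((((hid.const_mul c0).add ((h1.const_mul c1).div_const 2)).add
      ((h2.const_mul c2).div_const 3)).add ((h3.const_mul c3).div_const 4)).add
      ((h4.const_mul c4).div_const 5)).add ((h5.const_mul c5).div_const 6)).add
      ((h6.const_mul c6).div_const 7)
    have := this.const_mul E
    refine this.congr_deriv ?_
    push_cast
    ring
  rw [intervalIntegral.integral_eq_sub_of_hasDerivAt hF]
  · ring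
  · apply Continuous.intervalIntegrable
    fun_prop

lemma strip_ub {a b Ea R : ℝ} (ha : 0 ≤ a) (hab : a ≤ b)
    (hw : a*(b-a) + (b-a)^2/2 ≤ 1)
    (hEa : Real.exp (-(a^2/2)) ≤ Ea) (hEa0 : 0 ≤ Ea)
    (hR : Ea * ((b-a) + (-a)*((b-a)^2)/2 + (a^2/2 - 1/2)*((b-a)^3)/3
      + (a/2 + 2/9*a^3)*((b-a)^4)/4 + (1/8 + 1/3*a^2)*((b-a)^5)/5
      + (1/6*a)*((b-a)^6)/6 + (1/36)*((b-a)^7)/7) ≤ R) :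
    ∫ s in Ioc a b, gg s ≤ R := by
  have hpt : ∀ s ∈ Ioc a b, gg s ≤ Ea * (1 + (-a)*(s-a) + (a^2/2-1/2)*(s-a)^2
      + (a/2+2/9*a^3)*(s-a)^3 + (1/8+1/3*a^2)*(s-a)^4 + (1/6*a)*(s-a)^5 + (1/36)*(s-a)^6) := by
    intro s hs
    obtain ⟨hs1, hs2⟩ := hs
    have hw0 : 0 ≤ a*(s-a) + (s-a)^2/2 := by nlinarith
    have hw1 : a*(s-a) + (s-a)^2/2 ≤ 1 := by nlinarith
    have main : ∀ w : ℝ, 0 ≤ w → w ≤ 1 → Real.exp (-w) ≤ 1 - w + w^2/2 + 2/9*w^3 := by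
      intro w h0 h1
      have habs : |(-w)| ≤ 1 := by rw [abs_neg, abs_of_nonneg h0]; exact h1
      have hb := Real.exp_bound habs (n := 3) (by norm_num)
      have hsum : ∑ i ∈ Finset.range 3, (-w)^i / (Nat.factorial i : ℝ) = 1 - w + w^2/2 := by
        rw [Finset.sum_range_succ, Finset.sum_range_succ, Finset.sum_range_succ]
        norm_num [Nat.factorial]
        ring
      rw [hsum, abs_neg, abs_of_nonneg h0] at hb
      have h2 := (abs_le.mp hb).2
      norm_num [Nat.factorial] at h2
      linarith
    have hb2 := main _ hw0 hw1
    have hgg : gg s = Real.exp (-(a^2/2)) * Real.exp (-(a*(s-a) + (s-a)^2/2)) := by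
      simp only [gg]
      rw [← Real.exp_add]
      congr 1
      ring
    calc gg s ≤ Ea * (1 - (a*(s-a) + (s-a)^2/2) + (a*(s-a) + (s-a)^2/2)^2/2
          + 2/9*(a*(s-a) + (s-a)^2/2)^3) := by
          rw [hgg]
          apply mul_le_mul hEa hb2 (Real.exp_pos _).le hEa0
      _ = Ea * (1 + (-a)*(s-a) + (a^2/2-1/2)*(s-a)^2 + (a/2+2/9*a^3)*(s-a)^3
          + (1/8+1/3*a^2)*(s-a)^4 + (1/6*a)*(s-a)^5 + (1/36)*(s-a)^6) := by ring
  have hmono := setIntegral_mono_on gg_int.integrableOn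
    (Continuous.integrableOn_Ioc (by fun_prop)) measurableSet_Ioc hpt
  refine hmono.trans ?_
  rw [int_poly_Ioc a a b Ea 1 (-a) (a^2/2-1/2) (a/2+2/9*a^3) (1/8+1/3*a^2) (1/6*a) (1/36) hab]
  refine le_trans (le_of_eq ?_) hR
  ring

lemma strip_lb {a b Em R : ℝ} (hab : a ≤ b) (hEm0 : 0 ≤ Em)
    (hEm : Em ≤ Real.exp (-(((a+b)/2)^2/2)))
    (hR : R ≤ Em * ((b-a) - (b-a)^3/24)) : R ≤ ∫ s in Ioc a b, gg s := by
  have hpt : ∀ s ∈ Ioc a b, Em * (1 + (-((a+b)/2))*(s-(a+b)/2) + (-1/2)*(s-(a+b)/2)^2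
      + 0*(s-(a+b)/2)^3 + 0*(s-(a+b)/2)^4 + 0*(s-(a+b)/2)^5 + 0*(s-(a+b)/2)^6) ≤ gg s := by
    intro s _
    have hgg : gg s = Real.exp (-(((a+b)/2)^2/2))
        * Real.exp (-(((a+b)/2)*(s-(a+b)/2) + (s-(a+b)/2)^2/2)) := by
      simp only [gg]; rw [← Real.exp_add]; congr 1; ring
    have h1 : 1 - (((a+b)/2)*(s-(a+b)/2) + (s-(a+b)/2)^2/2)
        ≤ Real.exp (-(((a+b)/2)*(s-(a+b)/2) + (s-(a+b)/2)^2/2)) := by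
      have := Real.add_one_le_exp (-(((a+b)/2)*(s-(a+b)/2) + (s-(a+b)/2)^2/2))
      linarith
    have key : Em * (1 - (((a+b)/2)*(s-(a+b)/2) + (s-(a+b)/2)^2/2)) ≤ gg s := by
      rcases le_or_gt (1 - (((a+b)/2)*(s-(a+b)/2) + (s-(a+b)/2)^2/2)) 0 with hc | hc
      · have : 0 ≤ gg s := (Real.exp_pos _).le
        nlinarith
      · rw [hgg]
        have h2 : Em * (1 - (((a+b)/2)*(s-(a+b)/2) + (s-(a+b)/2)^2/2))
            ≤ Real.exp (-(((a+b)/2)^2/2)) * (1 - (((a+b)/2)*(s-(a+b)/2) + (s-(a+b)/2)^2/2)) :=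
          mul_le_mul_of_nonneg_right hEm hc.le
        refine h2.trans ?_
        exact mul_le_mul_of_nonneg_left h1 (Real.exp_pos _).le
    refine le_trans (le_of_eq ?_) key
    ring
  have hmono := setIntegral_mono_on (Continuous.integrableOn_Ioc (by fun_prop))
    gg_int.integrableOn measurableSet_Ioc hpt
  refine le_trans ?_ hmono
  rw [int_poly_Ioc ((a+b)/2) a b Em 1 (-((a+b)/2)) (-1/2) 0 0 0 0 hab]
  refine hR.trans (le_of_eq ?_)
  ring

lemma strip_rect_lb {a b c R : ℝ} (h0 : 0 ≤ a) (hab : a ≤ b) (hc : 0 ≤ c)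
    (hcb : c ≤ Real.exp (-(b^2/2))) (hR : R ≤ c*(b-a)) : R ≤ ∫ s in Ioc a b, gg s := by
  have hpt : ∀ s ∈ Ioc a b, c ≤ gg s := by
    intro s hs
    refine hcb.trans ?_
    simp only [gg]
    rw [Real.exp_le_exp]
    nlinarith [hs.1, hs.2]
  have hmono := setIntegral_mono_on (integrableOn_const (by
      rw [Real.volume_Ioc]; exact ENNReal.ofReal_ne_top))
    gg_int.integrableOn measurableSet_Ioc hpt
  refine le_trans ?_ hmono
  rw [setIntegral_const, Real.volume_real_Ioc_of_le hab, smul_eq_mul]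
  linarith [hR]

lemma exp_neg_ge (u : ℝ) (h0 : 0 ≤ u) (h1 : u ≤ 512) : (1 - u/512)^512 ≤ Real.exp (-u) := by
  have h2 : (0:ℝ) ≤ 1 - u/512 := by linarith
  have h3 : 1 - u/512 ≤ Real.exp (-(u/512)) := by
    have := Real.add_one_le_exp (-(u/512)); linarith
  calc (1-u/512)^512 ≤ (Real.exp (-(u/512)))^512 := pow_le_pow_left₀ h2 h3 _
    _ = Real.exp (-u) := by rw [← Real.exp_nat_mul]; push_cast; ring_nf

lemma exp_neg_le (u : ℝ) (h0 : 0 ≤ u) : Real.exp (-u) ≤ ((1 + u/512)^512)⁻¹ := by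
  have h3 : Real.exp (-(u/512)) ≤ (1 + u/512)⁻¹ := by
    rw [le_inv_comm₀ (Real.exp_pos _) (by linarith)]
    calc (1+u/512) ≤ Real.exp (u/512) := by have := Real.add_one_le_exp (u/512); linarith
      _ = (Real.exp (-(u/512)))⁻¹ := by rw [← Real.exp_neg]; ring_nf
  have h2 : (0:ℝ) ≤ Real.exp (-(u/512)) := (Real.exp_pos _).le
  calc Real.exp (-u) = (Real.exp (-(u/512)))^512 := by rw [← Real.exp_nat_mul]; push_cast; ring_nf
    _ ≤ ((1+u/512)⁻¹)^512 := pow_le_pow_left₀ h2 h3 _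
    _ = ((1+u/512)^512)⁻¹ := by rw [inv_pow]

lemma exp_ub_num {u q : ℝ} (h0 : 0 ≤ u) (h : q⁻¹ ≤ (((((((((1+u/512)^2)^2)^2)^2)^2)^2)^2)^2)^2) (hq : 0 < q) :
    Real.exp (-u) ≤ q := by
  rw [← pow_mul, ← pow_mul, ← pow_mul, ← pow_mul, ← pow_mul, ← pow_mul, ← pow_mul, ← pow_mul] at h
  refine (exp_neg_le u h0).trans ?_
  rw [inv_le_comm₀ (by positivity) hq]
  exact h

lemma exp_lb_num {u q : ℝ} (h0 : 0 ≤ u) (h1 : u ≤ 512) (h : q ≤ (((((((((1-u/512)^2)^2)^2)^2)^2)^2)^2)^2)^2) :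
    q ≤ Real.exp (-u) := by
  rw [← pow_mul, ← pow_mul, ← pow_mul, ← pow_mul, ← pow_mul, ← pow_mul, ← pow_mul, ← pow_mul] at h
  exact le_trans h (exp_neg_ge u h0 h1)

lemma mill_num {b q R : ℝ} (hb : 0 < b) (hq : Real.exp (-(b^2/2)) ≤ q) (hR : q * b⁻¹ ≤ R) :
    ∫ s in Ioi b, gg s ≤ R := by
  refine (mill hb).trans ?_
  rw [show -b^2/2 = -(b^2/2) by ring]
  calc Real.exp (-(b^2/2)) * b⁻¹ ≤ q * b⁻¹ :=
      mul_le_mul_of_nonneg_right hq (by positivity)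
    _ ≤ R := hR


lemma hEu0 : Real.exp (-((0.8:ℝ)^2/2)) ≤ (363110813/500000000 : ℝ) :=
  exp_ub_num (by positivity) (by norm_num) (by norm_num)
lemma hEu1 : Real.exp (-((0.9:ℝ)^2/2)) ≤ (1667709/2500000 : ℝ) :=
  exp_ub_num (by positivity) (by norm_num) (by norm_num)
lemma hEu2 : Real.exp (-((1:ℝ)^2/2)) ≤ (606678661/1000000000 : ℝ) :=
  exp_ub_num (by positivity) (by norm_num) (by norm_num)
lemma hEu3 : Real.exp (-((1.1:ℝ)^2/2)) ≤ (546269501/1000000000 : ℝ) :=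
  exp_ub_num (by positivity) (by norm_num) (by norm_num)
lemma hEu4 : Real.exp (-((1.2:ℝ)^2/2)) ≤ (243499253/500000000 : ℝ) :=
  exp_ub_num (by positivity) (by norm_num) (by norm_num)
lemma hEu5 : Real.exp (-((1.3:ℝ)^2/2)) ≤ (21492833/50000000 : ℝ) :=
  exp_ub_num (by positivity) (by norm_num) (by norm_num)
lemma hEu6 : Real.exp (-((1.4:ℝ)^2/2)) ≤ (11739463/31250000 : ℝ) :=
  exp_ub_num (by positivity) (by norm_num) (by norm_num)
lemma hEu7 : Real.exp (-((1.45:ℝ)^2/2)) ≤ (174938739/500000000 : ℝ) :=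
  exp_ub_num (by positivity) (by norm_num) (by norm_num)
lemma hEu8 : Real.exp (-((1.5:ℝ)^2/2)) ≤ (162526693/500000000 : ℝ) :=
  exp_ub_num (by positivity) (by norm_num) (by norm_num)
lemma hEu9 : Real.exp (-((1.55:ℝ)^2/2)) ≤ (150620749/500000000 : ℝ) :=
  exp_ub_num (by positivity) (by norm_num) (by norm_num)
lemma hEu10 : Real.exp (-((1.6:ℝ)^2/2)) ≤ (11139271/40000000 : ℝ) :=
  exp_ub_num (by positivity) (by norm_num) (by norm_num)
lemma hEu11 : Real.exp (-((1.65:ℝ)^2/2)) ≤ (8025113/31250000 : ℝ) :=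
  exp_ub_num (by positivity) (by norm_num) (by norm_num)
lemma hEu12 : Real.exp (-((1.7:ℝ)^2/2)) ≤ (23622637/100000000 : ℝ) :=
  exp_ub_num (by positivity) (by norm_num) (by norm_num)
lemma hEu13 : Real.exp (-((1.75:ℝ)^2/2)) ≤ (43351989/200000000 : ℝ) :=
  exp_ub_num (by positivity) (by norm_num) (by norm_num)
lemma hEu14 : Real.exp (-((1.8:ℝ)^2/2)) ≤ (198405473/1000000000 : ℝ) :=
  exp_ub_num (by positivity) (by norm_num) (by norm_num)
lemma hEu15 : Real.exp (-((1.85:ℝ)^2/2)) ≤ (22644503/125000000 : ℝ) :=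
  exp_ub_num (by positivity) (by norm_num) (by norm_num)
lemma hEu16 : Real.exp (-((1.9:ℝ)^2/2)) ≤ (164997363/1000000000 : ℝ) :=
  exp_ub_num (by positivity) (by norm_num) (by norm_num)
lemma hEu17 : Real.exp (-((1.95:ℝ)^2/2)) ≤ (149908723/1000000000 : ℝ) :=
  exp_ub_num (by positivity) (by norm_num) (by norm_num)
lemma hEu18 : Real.exp (-((2:ℝ)^2/2)) ≤ (135863593/1000000000 : ℝ) :=
  exp_ub_num (by positivity) (by norm_num) (by norm_num)
lemma hEu19 : Real.exp (-((2.05:ℝ)^2/2)) ≤ (30707623/250000000 : ℝ) :=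
  exp_ub_num (by positivity) (by norm_num) (by norm_num)
lemma hEu20 : Real.exp (-((2.1:ℝ)^2/2)) ≤ (110773743/1000000000 : ℝ) :=
  exp_ub_num (by positivity) (by norm_num) (by norm_num)
lemma hEu21 : Real.exp (-((2.15:ℝ)^2/2)) ≤ (24913553/250000000 : ℝ) :=
  exp_ub_num (by positivity) (by norm_num) (by norm_num)
lemma hEu22 : Real.exp (-((2.2:ℝ)^2/2)) ≤ (11178753/125000000 : ℝ) :=
  exp_ub_num (by positivity) (by norm_num) (by norm_num)
lemma hEu23 : Real.exp (-((2.25:ℝ)^2/2)) ≤ (80057233/1000000000 : ℝ) :=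
  exp_ub_num (by positivity) (by norm_num) (by norm_num)
lemma hEu24 : Real.exp (-((2.3:ℝ)^2/2)) ≤ (17872613/250000000 : ℝ) :=
  exp_ub_num (by positivity) (by norm_num) (by norm_num)
lemma hEu25 : Real.exp (-((2.35:ℝ)^2/2)) ≤ (63683431/1000000000 : ℝ) :=
  exp_ub_num (by positivity) (by norm_num) (by norm_num)
lemma hEu26 : Real.exp (-((2.4:ℝ)^2/2)) ≤ (5658959/100000000 : ℝ) :=
  exp_ub_num (by positivity) (by norm_num) (by norm_num)
lemma hEu27 : Real.exp (-((2.5:ℝ)^2/2)) ≤ (554453/12500000 : ℝ) :=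
  exp_ub_num (by positivity) (by norm_num) (by norm_num)
lemma hEu28 : Real.exp (-((2.6:ℝ)^2/2)) ≤ (6885551/200000000 : ℝ) :=
  exp_ub_num (by positivity) (by norm_num) (by norm_num)
lemma hEu29 : Real.exp (-((2.7:ℝ)^2/2)) ≤ (26460913/1000000000 : ℝ) :=
  exp_ub_num (by positivity) (by norm_num) (by norm_num)
lemma hEu30 : Real.exp (-((2.8:ℝ)^2/2)) ≤ (20139547/1000000000 : ℝ) :=
  exp_ub_num (by positivity) (by norm_num) (by norm_num)
lemma hEu31 : Real.exp (-((2.9:ℝ)^2/2)) ≤ (3794811/250000000 : ℝ) :=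
  exp_ub_num (by positivity) (by norm_num) (by norm_num)
lemma hEu32 : Real.exp (-((3:ℝ)^2/2)) ≤ (2832391/250000000 : ℝ) :=
  exp_ub_num (by positivity) (by norm_num) (by norm_num)
lemma hEu33 : Real.exp (-((3.5:ℝ)^2/2)) ≤ (1134231/500000000 : ℝ) :=
  exp_ub_num (by positivity) (by norm_num) (by norm_num)
lemma hEu34 : Real.exp (-((4:ℝ)^2/2)) ≤ (356869/1000000000 : ℝ) :=
  exp_ub_num (by positivity) (by norm_num) (by norm_num)
lemma hEu35 : Real.exp (-((4.5:ℝ)^2/2)) ≤ (44227/1000000000 : ℝ) :=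
  exp_ub_num (by positivity) (by norm_num) (by norm_num)
lemma hEu36 : Real.exp (-((5:ℝ)^2/2)) ≤ (4331/1000000000 : ℝ) :=
  exp_ub_num (by positivity) (by norm_num) (by norm_num)

lemma hEl0 : (150196841/500000000 : ℝ) ≤ Real.exp (-((((1.5:ℝ)+1.6)/2)^2/2)) :=
  exp_lb_num (by positivity) (by norm_num) (by norm_num)
lemma hEl1 : (127937941/500000000 : ℝ) ≤ Real.exp (-((((1.6:ℝ)+1.7)/2)^2/2)) :=
  exp_lb_num (by positivity) (by norm_num) (by norm_num)
lemma hEl2 : (53942387/250000000 : ℝ) ≤ Real.exp (-((((1.7:ℝ)+1.8)/2)^2/2)) :=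
  exp_lb_num (by positivity) (by norm_num) (by norm_num)
lemma hEl3 : (36024571/200000000 : ℝ) ≤ Real.exp (-((((1.8:ℝ)+1.9)/2)^2/2)) :=
  exp_lb_num (by positivity) (by norm_num) (by norm_num)
lemma hEl4 : (74427039/500000000 : ℝ) ≤ Real.exp (-((((1.9:ℝ)+2)/2)^2/2)) :=
  exp_lb_num (by positivity) (by norm_num) (by norm_num)
lemma hEl5 : (121775803/1000000000 : ℝ) ≤ Real.exp (-((((2:ℝ)+2.1)/2)^2/2)) :=
  exp_lb_num (by positivity) (by norm_num) (by norm_num)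
lemma hEl6 : (49309939/500000000 : ℝ) ≤ Real.exp (-((((2.1:ℝ)+2.2)/2)^2/2)) :=
  exp_lb_num (by positivity) (by norm_num) (by norm_num)
lemma hEl7 : (79061617/1000000000 : ℝ) ≤ Real.exp (-((((2.2:ℝ)+2.3)/2)^2/2)) :=
  exp_lb_num (by positivity) (by norm_num) (by norm_num)
lemma hEl8 : (12548419/200000000 : ℝ) ≤ Real.exp (-((((2.3:ℝ)+2.4)/2)^2/2)) :=
  exp_lb_num (by positivity) (by norm_num) (by norm_num)
lemma hEl9 : (4928769/100000000 : ℝ) ≤ Real.exp (-((((2.4:ℝ)+2.5)/2)^2/2)) :=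
  exp_lb_num (by positivity) (by norm_num) (by norm_num)
lemma hEl10 : (19163191/500000000 : ℝ) ≤ Real.exp (-((((2.5:ℝ)+2.6)/2)^2/2)) :=
  exp_lb_num (by positivity) (by norm_num) (by norm_num)
lemma hEl11 : (29500583/1000000000 : ℝ) ≤ Real.exp (-((((2.6:ℝ)+2.7)/2)^2/2)) :=
  exp_lb_num (by positivity) (by norm_num) (by norm_num)
lemma hEl12 : (22476569/1000000000 : ℝ) ≤ Real.exp (-((((2.7:ℝ)+2.8)/2)^2/2)) :=
  exp_lb_num (by positivity) (by norm_num) (by norm_num)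
lemma hEl13 : (3390151/200000000 : ℝ) ≤ Real.exp (-((((2.8:ℝ)+2.9)/2)^2/2)) :=
  exp_lb_num (by positivity) (by norm_num) (by norm_num)
lemma hEl14 : (31633/2500000 : ℝ) ≤ Real.exp (-((((2.9:ℝ)+3)/2)^2/2)) :=
  exp_lb_num (by positivity) (by norm_num) (by norm_num)
lemma hEl15 : (2337203/250000000 : ℝ) ≤ Real.exp (-((((3:ℝ)+3.1)/2)^2/2)) :=
  exp_lb_num (by positivity) (by norm_num) (by norm_num)
lemma hEl16 : (1367349/200000000 : ℝ) ≤ Real.exp (-((((3.1:ℝ)+3.2)/2)^2/2)) :=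
  exp_lb_num (by positivity) (by norm_num) (by norm_num)
lemma hEl17 : (494847/100000000 : ℝ) ≤ Real.exp (-((((3.2:ℝ)+3.3)/2)^2/2)) :=
  exp_lb_num (by positivity) (by norm_num) (by norm_num)
lemma hEl18 : (3544973/1000000000 : ℝ) ≤ Real.exp (-((((3.3:ℝ)+3.4)/2)^2/2)) :=
  exp_lb_num (by positivity) (by norm_num) (by norm_num)
lemma hEl19 : (628357/250000000 : ℝ) ≤ Real.exp (-((((3.4:ℝ)+3.5)/2)^2/2)) :=
  exp_lb_num (by positivity) (by norm_num) (by norm_num)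
lemma hEl20 : (1763691/1000000000 : ℝ) ≤ Real.exp (-((((3.5:ℝ)+3.6)/2)^2/2)) :=
  exp_lb_num (by positivity) (by norm_num) (by norm_num)
lemma hEl21 : (1224819/1000000000 : ℝ) ≤ Real.exp (-((((3.6:ℝ)+3.7)/2)^2/2)) :=
  exp_lb_num (by positivity) (by norm_num) (by norm_num)
lemma hEl22 : (841793/1000000000 : ℝ) ≤ Real.exp (-((((3.7:ℝ)+3.8)/2)^2/2)) :=
  exp_lb_num (by positivity) (by norm_num) (by norm_num)
lemma hEl23 : (143137/250000000 : ℝ) ≤ Real.exp (-((((3.8:ℝ)+3.9)/2)^2/2)) :=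
  exp_lb_num (by positivity) (by norm_num) (by norm_num)
lemma hEl24 : (192687/500000000 : ℝ) ≤ Real.exp (-((((3.9:ℝ)+4)/2)^2/2)) :=
  exp_lb_num (by positivity) (by norm_num) (by norm_num)
lemma hElrect : (324250869/1000000000 : ℝ) ≤ Real.exp (-((1.5:ℝ)^2/2)) :=
  exp_lb_num (by positivity) (by norm_num) (by norm_num)

set_option maxHeartbeats 2000000 in
lemma C_lb : (48546001/250000000 : ℝ) ≤ ∫ s in Ioi (Real.sqrt 2), gg s := by
  have hs2 : Real.sqrt 2 ≤ 1.41422 := by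
    rw [show (1.41422:ℝ) = Real.sqrt (1.41422^2) by rw [Real.sqrt_sq (by norm_num)]]
    exact Real.sqrt_le_sqrt (by norm_num)
  have hs2' : (0:ℝ) ≤ Real.sqrt 2 := Real.sqrt_nonneg 2
  have c0 : (27814239/1000000000 : ℝ) ≤ ∫ s in Ioc (Real.sqrt 2) 1.5, gg s :=
    strip_rect_lb hs2' (by linarith) (by norm_num) hElrect (by nlinarith)
  have c1 : (30026851/1000000000 : ℝ) ≤ ∫ s in Ioc (1.5:ℝ) 1.6, gg s :=
    strip_lb (by norm_num) (by norm_num) hEl0 (by norm_num)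
  have c2 : (12788463/500000000 : ℝ) ≤ ∫ s in Ioc (1.6:ℝ) 1.7, gg s :=
    strip_lb (by norm_num) (by norm_num) hEl1 (by norm_num)
  have c3 : (5391991/250000000 : ℝ) ≤ ∫ s in Ioc (1.7:ℝ) 1.8, gg s :=
    strip_lb (by norm_num) (by norm_num) hEl2 (by norm_num)
  have c4 : (900239/50000000 : ℝ) ≤ ∫ s in Ioc (1.8:ℝ) 1.9, gg s :=
    strip_lb (by norm_num) (by norm_num) hEl3 (by norm_num)
  have c5 : (2975841/200000000 : ℝ) ≤ ∫ s in Ioc (1.9:ℝ) 2, gg s :=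
    strip_lb (by norm_num) (by norm_num) hEl4 (by norm_num)
  have c6 : (6086253/500000000 : ℝ) ≤ ∫ s in Ioc (2:ℝ) 2.1, gg s :=
    strip_lb (by norm_num) (by norm_num) hEl5 (by norm_num)
  have c7 : (4928939/500000000 : ℝ) ≤ ∫ s in Ioc (2.1:ℝ) 2.2, gg s :=
    strip_lb (by norm_num) (by norm_num) hEl6 (by norm_num)
  have c8 : (7902867/1000000000 : ℝ) ≤ ∫ s in Ioc (2.2:ℝ) 2.3, gg s :=
    strip_lb (by norm_num) (by norm_num) hEl7 (by norm_num)
  have c9 : (1254319/200000000 : ℝ) ≤ ∫ s in Ioc (2.3:ℝ) 2.4, gg s :=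
    strip_lb (by norm_num) (by norm_num) hEl8 (by norm_num)
  have c10 : (985343/200000000 : ℝ) ≤ ∫ s in Ioc (2.4:ℝ) 2.5, gg s :=
    strip_lb (by norm_num) (by norm_num) hEl9 (by norm_num)
  have c11 : (3831041/1000000000 : ℝ) ≤ ∫ s in Ioc (2.5:ℝ) 2.6, gg s :=
    strip_lb (by norm_num) (by norm_num) hEl10 (by norm_num)
  have c12 : (2948829/1000000000 : ℝ) ≤ ∫ s in Ioc (2.6:ℝ) 2.7, gg s :=
    strip_lb (by norm_num) (by norm_num) hEl11 (by norm_num)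
  have c13 : (7021/3125000 : ℝ) ≤ ∫ s in Ioc (2.7:ℝ) 2.8, gg s :=
    strip_lb (by norm_num) (by norm_num) hEl12 (by norm_num)
  have c14 : (1694369/1000000000 : ℝ) ≤ ∫ s in Ioc (2.8:ℝ) 2.9, gg s :=
    strip_lb (by norm_num) (by norm_num) hEl13 (by norm_num)
  have c15 : (158099/125000000 : ℝ) ≤ ∫ s in Ioc (2.9:ℝ) 3, gg s :=
    strip_lb (by norm_num) (by norm_num) hEl14 (by norm_num)
  have c16 : (934491/1000000000 : ℝ) ≤ ∫ s in Ioc (3:ℝ) 3.1, gg s :=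
    strip_lb (by norm_num) (by norm_num) hEl15 (by norm_num)
  have c17 : (683389/1000000000 : ℝ) ≤ ∫ s in Ioc (3.1:ℝ) 3.2, gg s :=
    strip_lb (by norm_num) (by norm_num) hEl16 (by norm_num)
  have c18 : (6183/12500000 : ℝ) ≤ ∫ s in Ioc (3.2:ℝ) 3.3, gg s :=
    strip_lb (by norm_num) (by norm_num) hEl17 (by norm_num)
  have c19 : (354349/1000000000 : ℝ) ≤ ∫ s in Ioc (3.3:ℝ) 3.4, gg s :=
    strip_lb (by norm_num) (by norm_num) hEl18 (by norm_num)
  have c20 : (125619/500000000 : ℝ) ≤ ∫ s in Ioc (3.4:ℝ) 3.5, gg s :=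
    strip_lb (by norm_num) (by norm_num) hEl19 (by norm_num)
  have c21 : (35259/200000000 : ℝ) ≤ ∫ s in Ioc (3.5:ℝ) 3.6, gg s :=
    strip_lb (by norm_num) (by norm_num) hEl20 (by norm_num)
  have c22 : (12243/100000000 : ℝ) ≤ ∫ s in Ioc (3.6:ℝ) 3.7, gg s :=
    strip_lb (by norm_num) (by norm_num) hEl21 (by norm_num)
  have c23 : (5259/62500000 : ℝ) ≤ ∫ s in Ioc (3.7:ℝ) 3.8, gg s :=
    strip_lb (by norm_num) (by norm_num) hEl22 (by norm_num)
  have c24 : (5723/100000000 : ℝ) ≤ ∫ s in Ioc (3.8:ℝ) 3.9, gg s :=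
    strip_lb (by norm_num) (by norm_num) hEl23 (by norm_num)
  have c25 : (38521/1000000000 : ℝ) ≤ ∫ s in Ioc (3.9:ℝ) 4, gg s :=
    strip_lb (by norm_num) (by norm_num) hEl24 (by norm_num)
  have e0 := I_split (show Real.sqrt 2 ≤ 1.5 by linarith)
  have e1 := I_split (show (1.5:ℝ) ≤ 1.6 by norm_num)
  have e2 := I_split (show (1.6:ℝ) ≤ 1.7 by norm_num)
  have e3 := I_split (show (1.7:ℝ) ≤ 1.8 by norm_num)
  have e4 := I_split (show (1.8:ℝ) ≤ 1.9 by norm_num)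
  have e5 := I_split (show (1.9:ℝ) ≤ 2 by norm_num)
  have e6 := I_split (show (2:ℝ) ≤ 2.1 by norm_num)
  have e7 := I_split (show (2.1:ℝ) ≤ 2.2 by norm_num)
  have e8 := I_split (show (2.2:ℝ) ≤ 2.3 by norm_num)
  have e9 := I_split (show (2.3:ℝ) ≤ 2.4 by norm_num)
  have e10 := I_split (show (2.4:ℝ) ≤ 2.5 by norm_num)
  have e11 := I_split (show (2.5:ℝ) ≤ 2.6 by norm_num)
  have e12 := I_split (show (2.6:ℝ) ≤ 2.7 by norm_num)
  have e13 := I_split (show (2.7:ℝ) ≤ 2.8 by norm_num)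
  have e14 := I_split (show (2.8:ℝ) ≤ 2.9 by norm_num)
  have e15 := I_split (show (2.9:ℝ) ≤ 3 by norm_num)
  have e16 := I_split (show (3:ℝ) ≤ 3.1 by norm_num)
  have e17 := I_split (show (3.1:ℝ) ≤ 3.2 by norm_num)
  have e18 := I_split (show (3.2:ℝ) ≤ 3.3 by norm_num)
  have e19 := I_split (show (3.3:ℝ) ≤ 3.4 by norm_num)
  have e20 := I_split (show (3.4:ℝ) ≤ 3.5 by norm_num)
  have e21 := I_split (show (3.5:ℝ) ≤ 3.6 by norm_num)
  have e22 := I_split (show (3.6:ℝ) ≤ 3.7 by norm_num)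
  have e23 := I_split (show (3.7:ℝ) ≤ 3.8 by norm_num)
  have e24 := I_split (show (3.8:ℝ) ≤ 3.9 by norm_num)
  have e25 := I_split (show (3.9:ℝ) ≤ 4 by norm_num)
  have etail := I_nonneg 4
  linarith

lemma hU_3 : ∫ s in Ioi (3:ℝ), gg s ≤ (1888261/500000000 : ℝ) :=
  mill_num (by norm_num) hEu32 (by norm_num)
lemma hU_2_9 : ∫ s in Ioi (2.9:ℝ), gg s ≤ (5095791/1000000000 : ℝ) := by
  have hstrip : ∫ s in Ioc (2.9:ℝ) 3, gg s ≤ (1319269/1000000000 : ℝ) :=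
    strip_ub (by norm_num) (by norm_num) (by norm_num) hEu31 (by norm_num) (by norm_num)
  rw [I_split (show (2.9:ℝ) ≤ 3 by norm_num)]
  linarith [hU_3]
lemma hU_2_8 : ∫ s in Ioi (2.8:ℝ), gg s ≤ (274161/40000000 : ℝ) := by
  have hstrip : ∫ s in Ioc (2.8:ℝ) 2.9, gg s ≤ (879117/500000000 : ℝ) :=
    strip_ub (by norm_num) (by norm_num) (by norm_num) hEu30 (by norm_num) (by norm_num)
  rw [I_split (show (2.8:ℝ) ≤ 2.9 by norm_num)]
  linarith [hU_2_9]
lemma hU_2_7 : ∫ s in Ioi (2.7:ℝ), gg s ≤ (4587279/500000000 : ℝ) := by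
  have hstrip : ∫ s in Ioc (2.7:ℝ) 2.8, gg s ≤ (2320533/1000000000 : ℝ) :=
    strip_ub (by norm_num) (by norm_num) (by norm_num) hEu29 (by norm_num) (by norm_num)
  rw [I_split (show (2.7:ℝ) ≤ 2.8 by norm_num)]
  linarith [hU_2_8]
lemma hU_2_6 : ∫ s in Ioi (2.6:ℝ), gg s ≤ (12207471/1000000000 : ℝ) := by
  have hstrip : ∫ s in Ioc (2.6:ℝ) 2.7, gg s ≤ (3032913/1000000000 : ℝ) :=
    strip_ub (by norm_num) (by norm_num) (by norm_num) hEu28 (by norm_num) (by norm_num)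
  rw [I_split (show (2.6:ℝ) ≤ 2.7 by norm_num)]
  linarith [hU_2_7]
lemma hU_2_5 : ∫ s in Ioi (2.5:ℝ), gg s ≤ (1613289/100000000 : ℝ) := by
  have hstrip : ∫ s in Ioc (2.5:ℝ) 2.6, gg s ≤ (3925419/1000000000 : ℝ) :=
    strip_ub (by norm_num) (by norm_num) (by norm_num) hEu27 (by norm_num) (by norm_num)
  rw [I_split (show (2.5:ℝ) ≤ 2.6 by norm_num)]
  linarith [hU_2_6]
lemma hU_2_4 : ∫ s in Ioi (2.4:ℝ), gg s ≤ (5290987/250000000 : ℝ) := by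
  have hstrip : ∫ s in Ioc (2.4:ℝ) 2.5, gg s ≤ (2515529/500000000 : ℝ) :=
    strip_ub (by norm_num) (by norm_num) (by norm_num) hEu26 (by norm_num) (by norm_num)
  rw [I_split (show (2.4:ℝ) ≤ 2.5 by norm_num)]
  linarith [hU_2_5]
lemma hU_2_35 : ∫ s in Ioi (2.35:ℝ), gg s ≤ (12083731/500000000 : ℝ) := by
  have hstrip : ∫ s in Ioc (2.35:ℝ) 2.4, gg s ≤ (1501757/500000000 : ℝ) :=
    strip_ub (by norm_num) (by norm_num) (by norm_num) hEu25 (by norm_num) (by norm_num)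
  rw [I_split (show (2.35:ℝ) ≤ 2.4 by norm_num)]
  linarith [hU_2_4]
lemma hU_2_3 : ∫ s in Ioi (2.3:ℝ), gg s ≤ (27543279/1000000000 : ℝ) := by
  have hstrip : ∫ s in Ioc (2.3:ℝ) 2.35, gg s ≤ (3375817/1000000000 : ℝ) :=
    strip_ub (by norm_num) (by norm_num) (by norm_num) hEu24 (by norm_num) (by norm_num)
  rw [I_split (show (2.3:ℝ) ≤ 2.35 by norm_num)]
  linarith [hU_2_35]
lemma hU_2_25 : ∫ s in Ioi (2.25:ℝ), gg s ≤ (15664111/500000000 : ℝ) := by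
  have hstrip : ∫ s in Ioc (2.25:ℝ) 2.3, gg s ≤ (3784943/1000000000 : ℝ) :=
    strip_ub (by norm_num) (by norm_num) (by norm_num) hEu23 (by norm_num) (by norm_num)
  rw [I_split (show (2.25:ℝ) ≤ 2.3 by norm_num)]
  linarith [hU_2_3]
lemma hU_2_2 : ∫ s in Ioi (2.2:ℝ), gg s ≤ (222259/6250000 : ℝ) := by
  have hstrip : ∫ s in Ioc (2.2:ℝ) 2.25, gg s ≤ (2116609/500000000 : ℝ) :=
    strip_ub (by norm_num) (by norm_num) (by norm_num) hEu22 (by norm_num) (by norm_num)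
  rw [I_split (show (2.2:ℝ) ≤ 2.25 by norm_num)]
  linarith [hU_2_25]
lemma hU_2_15 : ∫ s in Ioi (2.15:ℝ), gg s ≤ (40284373/1000000000 : ℝ) := by
  have hstrip : ∫ s in Ioc (2.15:ℝ) 2.2, gg s ≤ (4722933/1000000000 : ℝ) :=
    strip_ub (by norm_num) (by norm_num) (by norm_num) hEu21 (by norm_num) (by norm_num)
  rw [I_split (show (2.15:ℝ) ≤ 2.2 by norm_num)]
  linarith [hU_2_2]
lemma hU_2_1 : ∫ s in Ioi (2.1:ℝ), gg s ≤ (22770349/500000000 : ℝ) := by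
  have hstrip : ∫ s in Ioc (2.1:ℝ) 2.15, gg s ≤ (210253/40000000 : ℝ) :=
    strip_ub (by norm_num) (by norm_num) (by norm_num) hEu20 (by norm_num) (by norm_num)
  rw [I_split (show (2.1:ℝ) ≤ 2.15 by norm_num)]
  linarith [hU_2_15]
lemma hU_2_05 : ∫ s in Ioi (2.05:ℝ), gg s ≤ (51376241/1000000000 : ℝ) := by
  have hstrip : ∫ s in Ioc (2.05:ℝ) 2.1, gg s ≤ (5835543/1000000000 : ℝ) :=
    strip_ub (by norm_num) (by norm_num) (by norm_num) hEu19 (by norm_num) (by norm_num)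
  rw [I_split (show (2.05:ℝ) ≤ 2.1 by norm_num)]
  linarith [hU_2_1]
lemma hU_2_0 : ∫ s in Ioi (2:ℝ), gg s ≤ (7229857/125000000 : ℝ) := by
  have hstrip : ∫ s in Ioc (2:ℝ) 2.05, gg s ≤ (1292523/200000000 : ℝ) :=
    strip_ub (by norm_num) (by norm_num) (by norm_num) hEu18 (by norm_num) (by norm_num)
  rw [I_split (show (2:ℝ) ≤ 2.05 by norm_num)]
  linarith [hU_2_05]
lemma hU_1_95 : ∫ s in Ioi (1.95:ℝ), gg s ≤ (6497827/100000000 : ℝ) := by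
  have hstrip : ∫ s in Ioc (1.95:ℝ) 2, gg s ≤ (3569707/500000000 : ℝ) :=
    strip_ub (by norm_num) (by norm_num) (by norm_num) hEu17 (by norm_num) (by norm_num)
  rw [I_split (show (1.95:ℝ) ≤ 2 by norm_num)]
  linarith [hU_2_0]
lemma hU_1_9 : ∫ s in Ioi (1.9:ℝ), gg s ≤ (72845893/1000000000 : ℝ) := by
  have hstrip : ∫ s in Ioc (1.9:ℝ) 1.95, gg s ≤ (7867623/1000000000 : ℝ) :=
    strip_ub (by norm_num) (by norm_num) (by norm_num) hEu16 (by norm_num) (by norm_num)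
  rw [I_split (show (1.9:ℝ) ≤ 1.95 by norm_num)]
  linarith [hU_1_95]
lemma hU_1_85 : ∫ s in Ioi (1.85:ℝ), gg s ≤ (81494589/1000000000 : ℝ) := by
  have hstrip : ∫ s in Ioc (1.85:ℝ) 1.9, gg s ≤ (1081087/125000000 : ℝ) :=
    strip_ub (by norm_num) (by norm_num) (by norm_num) hEu15 (by norm_num) (by norm_num)
  rw [I_split (show (1.85:ℝ) ≤ 1.9 by norm_num)]
  linarith [hU_1_9]
lemma hU_1_8 : ∫ s in Ioi (1.8:ℝ), gg s ≤ (45489203/500000000 : ℝ) := by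
  have hstrip : ∫ s in Ioc (1.8:ℝ) 1.85, gg s ≤ (9483817/1000000000 : ℝ) :=
    strip_ub (by norm_num) (by norm_num) (by norm_num) hEu14 (by norm_num) (by norm_num)
  rw [I_split (show (1.8:ℝ) ≤ 1.85 by norm_num)]
  linarith [hU_1_85]
lemma hU_1_75 : ∫ s in Ioi (1.75:ℝ), gg s ≤ (101352271/1000000000 : ℝ) := by
  have hstrip : ∫ s in Ioc (1.75:ℝ) 1.8, gg s ≤ (2074773/200000000 : ℝ) :=
    strip_ub (by norm_num) (by norm_num) (by norm_num) hEu13 (by norm_num) (by norm_num)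
  rw [I_split (show (1.75:ℝ) ≤ 1.8 by norm_num)]
  linarith [hU_1_8]
lemma hU_1_7 : ∫ s in Ioi (1.7:ℝ), gg s ≤ (112671643/1000000000 : ℝ) := by
  have hstrip : ∫ s in Ioc (1.7:ℝ) 1.75, gg s ≤ (2829843/250000000 : ℝ) :=
    strip_ub (by norm_num) (by norm_num) (by norm_num) hEu12 (by norm_num) (by norm_num)
  rw [I_split (show (1.7:ℝ) ≤ 1.75 by norm_num)]
  linarith [hU_1_75]
lemma hU_1_65 : ∫ s in Ioi (1.65:ℝ), gg s ≤ (124992131/1000000000 : ℝ) := by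
  have hstrip : ∫ s in Ioc (1.65:ℝ) 1.7, gg s ≤ (1540061/125000000 : ℝ) :=
    strip_ub (by norm_num) (by norm_num) (by norm_num) hEu11 (by norm_num) (by norm_num)
  rw [I_split (show (1.65:ℝ) ≤ 1.7 by norm_num)]
  linarith [hU_1_7]
lemma hU_1_6 : ∫ s in Ioi (1.6:ℝ), gg s ≤ (138369069/1000000000 : ℝ) := by
  have hstrip : ∫ s in Ioc (1.6:ℝ) 1.65, gg s ≤ (6688469/500000000 : ℝ) :=
    strip_ub (by norm_num) (by norm_num) (by norm_num) hEu10 (by norm_num) (by norm_num)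
  rw [I_split (show (1.6:ℝ) ≤ 1.65 by norm_num)]
  linarith [hU_1_65]
lemma hU_1_55 : ∫ s in Ioi (1.55:ℝ), gg s ≤ (152857063/1000000000 : ℝ) := by
  have hstrip : ∫ s in Ioc (1.55:ℝ) 1.6, gg s ≤ (7243997/500000000 : ℝ) :=
    strip_ub (by norm_num) (by norm_num) (by norm_num) hEu9 (by norm_num) (by norm_num)
  rw [I_split (show (1.55:ℝ) ≤ 1.6 by norm_num)]
  linarith [hU_1_6]
lemma hU_1_5 : ∫ s in Ioi (1.5:ℝ), gg s ≤ (84254751/500000000 : ℝ) := by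
  have hstrip : ∫ s in Ioc (1.5:ℝ) 1.55, gg s ≤ (15652439/1000000000 : ℝ) :=
    strip_ub (by norm_num) (by norm_num) (by norm_num) hEu8 (by norm_num) (by norm_num)
  rw [I_split (show (1.5:ℝ) ≤ 1.55 by norm_num)]
  linarith [hU_1_55]
lemma hU_1_45 : ∫ s in Ioi (1.45:ℝ), gg s ≤ (37075609/200000000 : ℝ) := by
  have hstrip : ∫ s in Ioc (1.45:ℝ) 1.5, gg s ≤ (16868543/1000000000 : ℝ) :=
    strip_ub (by norm_num) (by norm_num) (by norm_num) hEu7 (by norm_num) (by norm_num)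
  rw [I_split (show (1.45:ℝ) ≤ 1.5 by norm_num)]
  linarith [hU_1_5]
lemma hU_1_4 : ∫ s in Ioi (1.4:ℝ), gg s ≤ (203512077/1000000000 : ℝ) := by
  have hstrip : ∫ s in Ioc (1.4:ℝ) 1.45, gg s ≤ (1133377/62500000 : ℝ) :=
    strip_ub (by norm_num) (by norm_num) (by norm_num) hEu6 (by norm_num) (by norm_num)
  rw [I_split (show (1.4:ℝ) ≤ 1.45 by norm_num)]
  linarith [hU_1_45]
lemma hU_1_3 : ∫ s in Ioi (1.3:ℝ), gg s ≤ (60941487/250000000 : ℝ) := by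
  have hstrip : ∫ s in Ioc (1.3:ℝ) 1.4, gg s ≤ (40253871/1000000000 : ℝ) :=
    strip_ub (by norm_num) (by norm_num) (by norm_num) hEu5 (by norm_num) (by norm_num)
  rw [I_split (show (1.3:ℝ) ≤ 1.4 by norm_num)]
  linarith [hU_1_4]
lemma hU_1_2 : ∫ s in Ioi (1.2:ℝ), gg s ≤ (289592107/1000000000 : ℝ) := by
  have hstrip : ∫ s in Ioc (1.2:ℝ) 1.3, gg s ≤ (45826159/1000000000 : ℝ) :=
    strip_ub (by norm_num) (by norm_num) (by norm_num) hEu4 (by norm_num) (by norm_num)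
  rw [I_split (show (1.2:ℝ) ≤ 1.3 by norm_num)]
  linarith [hU_1_3]
lemma hU_1_1 : ∫ s in Ioi (1.1:ℝ), gg s ≤ (341245839/1000000000 : ℝ) := by
  have hstrip : ∫ s in Ioc (1.1:ℝ) 1.2, gg s ≤ (12913433/250000000 : ℝ) :=
    strip_ub (by norm_num) (by norm_num) (by norm_num) hEu3 (by norm_num) (by norm_num)
  rw [I_split (show (1.1:ℝ) ≤ 1.2 by norm_num)]
  linarith [hU_1_2]
lemma hU_1_0 : ∫ s in Ioi (1:ℝ), gg s ≤ (398891839/1000000000 : ℝ) := by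
  have hstrip : ∫ s in Ioc (1:ℝ) 1.1, gg s ≤ (28823/500000 : ℝ) :=
    strip_ub (by norm_num) (by norm_num) (by norm_num) hEu2 (by norm_num) (by norm_num)
  rw [I_split (show (1:ℝ) ≤ 1.1 by norm_num)]
  linarith [hU_1_1]
lemma hU_0_9 : ∫ s in Ioi (0.9:ℝ), gg s ≤ (462587949/1000000000 : ℝ) := by
  have hstrip : ∫ s in Ioc (0.9:ℝ) 1, gg s ≤ (6369611/100000000 : ℝ) :=
    strip_ub (by norm_num) (by norm_num) (by norm_num) hEu1 (by norm_num) (by norm_num)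
  rw [I_split (show (0.9:ℝ) ≤ 1 by norm_num)]
  linarith [hU_1_0]
lemma hU_0_8 : ∫ s in Ioi (0.8:ℝ), gg s ≤ (4158371/7812500 : ℝ) := by
  have hstrip : ∫ s in Ioc (0.8:ℝ) 0.9, gg s ≤ (69683539/1000000000 : ℝ) :=
    strip_ub (by norm_num) (by norm_num) (by norm_num) hEu0 (by norm_num) (by norm_num)
  rw [I_split (show (0.8:ℝ) ≤ 0.9 by norm_num)]
  linarith [hU_0_9]
lemma hU_3_5 : ∫ s in Ioi (3.5:ℝ), gg s ≤ (162033/250000000 : ℝ) :=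
  mill_num (by norm_num) hEu33 (by norm_num)
lemma hU_4_0 : ∫ s in Ioi (4:ℝ), gg s ≤ (44609/500000000 : ℝ) :=
  mill_num (by norm_num) hEu34 (by norm_num)
lemma hU_4_5 : ∫ s in Ioi (4.5:ℝ), gg s ≤ (9829/1000000000 : ℝ) :=
  mill_num (by norm_num) hEu35 (by norm_num)
lemma hU_5_0 : ∫ s in Ioi (5:ℝ), gg s ≤ (867/1000000000 : ℝ) :=
  mill_num (by norm_num) hEu36 (by norm_num)

set_option maxHeartbeats 8000000 in
lemma key (t : ℝ) (ht : 0 < t) :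
    t^4 * (∫ s in Ioi t, gg s) < 6 * ∫ s in Ioi (Real.sqrt 2), gg s := by
  have hC := C_lb
  rcases le_or_gt t 0.8 with h0 | h0
  · have hp4 : t^4 ≤ (0.8:ℝ)^4 := pow_le_pow_left₀ ht.le h0 4
    have hs : Real.sqrt (2*π) ≤ 2.5067 := by
      rw [show (2.5067:ℝ) = Real.sqrt (2.5067^2) by rw [Real.sqrt_sq (by norm_num)]]
      exact Real.sqrt_le_sqrt (by nlinarith [Real.pi_lt_d6])
    calc t^4 * (∫ s in Ioi t, gg s) ≤ (0.8:ℝ)^4 * 2.5067 :=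
        mul_le_mul hp4 ((I_le_total t).trans hs) (I_nonneg t) (by norm_num)
      _ < 6 * (48546001/250000000 : ℝ) := by norm_num
      _ ≤ 6 * ∫ s in Ioi (Real.sqrt 2), gg s := by linarith
  rcases le_or_gt t 0.9 with h1 | h1
  · have hp4 : t^4 ≤ (0.9:ℝ)^4 := pow_le_pow_left₀ ht.le h1 4
    have hQ : (∫ s in Ioi t, gg s) ≤ (4158371/7812500 : ℝ) := le_trans (I_mono h0.le) hU_0_8
    calc t^4 * (∫ s in Ioi t, gg s) ≤ (0.9:ℝ)^4 * (4158371/7812500 : ℝ) :=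
        mul_le_mul hp4 hQ (I_nonneg t) (by norm_num)
      _ < 6 * (48546001/250000000 : ℝ) := by norm_num
      _ ≤ 6 * ∫ s in Ioi (Real.sqrt 2), gg s := by linarith
  rcases le_or_gt t 1 with h2 | h2
  · have hp4 : t^4 ≤ (1:ℝ)^4 := pow_le_pow_left₀ ht.le h2 4
    have hQ : (∫ s in Ioi t, gg s) ≤ (462587949/1000000000 : ℝ) := le_trans (I_mono h1.le) hU_0_9
    calc t^4 * (∫ s in Ioi t, gg s) ≤ (1:ℝ)^4 * (462587949/1000000000 : ℝ) :=
        mul_le_mul hp4 hQ (I_nonneg t) (by norm_num)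
      _ < 6 * (48546001/250000000 : ℝ) := by norm_num
      _ ≤ 6 * ∫ s in Ioi (Real.sqrt 2), gg s := by linarith
  rcases le_or_gt t 1.1 with h3 | h3
  · have hp4 : t^4 ≤ (1.1:ℝ)^4 := pow_le_pow_left₀ ht.le h3 4
    have hQ : (∫ s in Ioi t, gg s) ≤ (398891839/1000000000 : ℝ) := le_trans (I_mono h2.le) hU_1_0
    calc t^4 * (∫ s in Ioi t, gg s) ≤ (1.1:ℝ)^4 * (398891839/1000000000 : ℝ) :=
        mul_le_mul hp4 hQ (I_nonneg t) (by norm_num)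
      _ < 6 * (48546001/250000000 : ℝ) := by norm_num
      _ ≤ 6 * ∫ s in Ioi (Real.sqrt 2), gg s := by linarith
  rcases le_or_gt t 1.2 with h4 | h4
  · have hp4 : t^4 ≤ (1.2:ℝ)^4 := pow_le_pow_left₀ ht.le h4 4
    have hQ : (∫ s in Ioi t, gg s) ≤ (341245839/1000000000 : ℝ) := le_trans (I_mono h3.le) hU_1_1
    calc t^4 * (∫ s in Ioi t, gg s) ≤ (1.2:ℝ)^4 * (341245839/1000000000 : ℝ) :=
        mul_le_mul hp4 hQ (I_nonneg t) (by norm_num)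
      _ < 6 * (48546001/250000000 : ℝ) := by norm_num
      _ ≤ 6 * ∫ s in Ioi (Real.sqrt 2), gg s := by linarith
  rcases le_or_gt t 1.3 with h5 | h5
  · have hp4 : t^4 ≤ (1.3:ℝ)^4 := pow_le_pow_left₀ ht.le h5 4
    have hQ : (∫ s in Ioi t, gg s) ≤ (289592107/1000000000 : ℝ) := le_trans (I_mono h4.le) hU_1_2
    calc t^4 * (∫ s in Ioi t, gg s) ≤ (1.3:ℝ)^4 * (289592107/1000000000 : ℝ) :=
        mul_le_mul hp4 hQ (I_nonneg t) (by norm_num)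
      _ < 6 * (48546001/250000000 : ℝ) := by norm_num
      _ ≤ 6 * ∫ s in Ioi (Real.sqrt 2), gg s := by linarith
  rcases le_or_gt t 1.4 with h6 | h6
  · have hp4 : t^4 ≤ (1.4:ℝ)^4 := pow_le_pow_left₀ ht.le h6 4
    have hQ : (∫ s in Ioi t, gg s) ≤ (60941487/250000000 : ℝ) := le_trans (I_mono h5.le) hU_1_3
    calc t^4 * (∫ s in Ioi t, gg s) ≤ (1.4:ℝ)^4 * (60941487/250000000 : ℝ) :=
        mul_le_mul hp4 hQ (I_nonneg t) (by norm_num)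
      _ < 6 * (48546001/250000000 : ℝ) := by norm_num
      _ ≤ 6 * ∫ s in Ioi (Real.sqrt 2), gg s := by linarith
  rcases le_or_gt t 1.45 with h7 | h7
  · have hp4 : t^4 ≤ (1.45:ℝ)^4 := pow_le_pow_left₀ ht.le h7 4
    have hQ : (∫ s in Ioi t, gg s) ≤ (203512077/1000000000 : ℝ) := le_trans (I_mono h6.le) hU_1_4
    calc t^4 * (∫ s in Ioi t, gg s) ≤ (1.45:ℝ)^4 * (203512077/1000000000 : ℝ) :=
        mul_le_mul hp4 hQ (I_nonneg t) (by norm_num)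
      _ < 6 * (48546001/250000000 : ℝ) := by norm_num
      _ ≤ 6 * ∫ s in Ioi (Real.sqrt 2), gg s := by linarith
  rcases le_or_gt t 1.5 with h8 | h8
  · have hp4 : t^4 ≤ (1.5:ℝ)^4 := pow_le_pow_left₀ ht.le h8 4
    have hQ : (∫ s in Ioi t, gg s) ≤ (37075609/200000000 : ℝ) := le_trans (I_mono h7.le) hU_1_45
    calc t^4 * (∫ s in Ioi t, gg s) ≤ (1.5:ℝ)^4 * (37075609/200000000 : ℝ) :=
        mul_le_mul hp4 hQ (I_nonneg t) (by norm_num)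
      _ < 6 * (48546001/250000000 : ℝ) := by norm_num
      _ ≤ 6 * ∫ s in Ioi (Real.sqrt 2), gg s := by linarith
  rcases le_or_gt t 1.55 with h9 | h9
  · have hp4 : t^4 ≤ (1.55:ℝ)^4 := pow_le_pow_left₀ ht.le h9 4
    have hQ : (∫ s in Ioi t, gg s) ≤ (84254751/500000000 : ℝ) := le_trans (I_mono h8.le) hU_1_5
    calc t^4 * (∫ s in Ioi t, gg s) ≤ (1.55:ℝ)^4 * (84254751/500000000 : ℝ) :=
        mul_le_mul hp4 hQ (I_nonneg t) (by norm_num)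
      _ < 6 * (48546001/250000000 : ℝ) := by norm_num
      _ ≤ 6 * ∫ s in Ioi (Real.sqrt 2), gg s := by linarith
  rcases le_or_gt t 1.6 with h10 | h10
  · have hp4 : t^4 ≤ (1.6:ℝ)^4 := pow_le_pow_left₀ ht.le h10 4
    have hQ : (∫ s in Ioi t, gg s) ≤ (152857063/1000000000 : ℝ) := le_trans (I_mono h9.le) hU_1_55
    calc t^4 * (∫ s in Ioi t, gg s) ≤ (1.6:ℝ)^4 * (152857063/1000000000 : ℝ) :=
        mul_le_mul hp4 hQ (I_nonneg t) (by norm_num)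
      _ < 6 * (48546001/250000000 : ℝ) := by norm_num
      _ ≤ 6 * ∫ s in Ioi (Real.sqrt 2), gg s := by linarith
  rcases le_or_gt t 1.65 with h11 | h11
  · have hp4 : t^4 ≤ (1.65:ℝ)^4 := pow_le_pow_left₀ ht.le h11 4
    have hQ : (∫ s in Ioi t, gg s) ≤ (138369069/1000000000 : ℝ) := le_trans (I_mono h10.le) hU_1_6
    calc t^4 * (∫ s in Ioi t, gg s) ≤ (1.65:ℝ)^4 * (138369069/1000000000 : ℝ) :=
        mul_le_mul hp4 hQ (I_nonneg t) (by norm_num)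
      _ < 6 * (48546001/250000000 : ℝ) := by norm_num
      _ ≤ 6 * ∫ s in Ioi (Real.sqrt 2), gg s := by linarith
  rcases le_or_gt t 1.7 with h12 | h12
  · have hp4 : t^4 ≤ (1.7:ℝ)^4 := pow_le_pow_left₀ ht.le h12 4
    have hQ : (∫ s in Ioi t, gg s) ≤ (124992131/1000000000 : ℝ) := le_trans (I_mono h11.le) hU_1_65
    calc t^4 * (∫ s in Ioi t, gg s) ≤ (1.7:ℝ)^4 * (124992131/1000000000 : ℝ) :=
        mul_le_mul hp4 hQ (I_nonneg t) (by norm_num)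
      _ < 6 * (48546001/250000000 : ℝ) := by norm_num
      _ ≤ 6 * ∫ s in Ioi (Real.sqrt 2), gg s := by linarith
  rcases le_or_gt t 1.75 with h13 | h13
  · have hp4 : t^4 ≤ (1.75:ℝ)^4 := pow_le_pow_left₀ ht.le h13 4
    have hQ : (∫ s in Ioi t, gg s) ≤ (112671643/1000000000 : ℝ) := le_trans (I_mono h12.le) hU_1_7
    calc t^4 * (∫ s in Ioi t, gg s) ≤ (1.75:ℝ)^4 * (112671643/1000000000 : ℝ) :=
        mul_le_mul hp4 hQ (I_nonneg t) (by norm_num)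
      _ < 6 * (48546001/250000000 : ℝ) := by norm_num
      _ ≤ 6 * ∫ s in Ioi (Real.sqrt 2), gg s := by linarith
  rcases le_or_gt t 1.8 with h14 | h14
  · have hp4 : t^4 ≤ (1.8:ℝ)^4 := pow_le_pow_left₀ ht.le h14 4
    have hQ : (∫ s in Ioi t, gg s) ≤ (101352271/1000000000 : ℝ) := le_trans (I_mono h13.le) hU_1_75
    calc t^4 * (∫ s in Ioi t, gg s) ≤ (1.8:ℝ)^4 * (101352271/1000000000 : ℝ) :=
        mul_le_mul hp4 hQ (I_nonneg t) (by norm_num)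
      _ < 6 * (48546001/250000000 : ℝ) := by norm_num
      _ ≤ 6 * ∫ s in Ioi (Real.sqrt 2), gg s := by linarith
  rcases le_or_gt t 1.85 with h15 | h15
  · have hp4 : t^4 ≤ (1.85:ℝ)^4 := pow_le_pow_left₀ ht.le h15 4
    have hQ : (∫ s in Ioi t, gg s) ≤ (45489203/500000000 : ℝ) := le_trans (I_mono h14.le) hU_1_8
    calc t^4 * (∫ s in Ioi t, gg s) ≤ (1.85:ℝ)^4 * (45489203/500000000 : ℝ) :=
        mul_le_mul hp4 hQ (I_nonneg t) (by norm_num)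
      _ < 6 * (48546001/250000000 : ℝ) := by norm_num
      _ ≤ 6 * ∫ s in Ioi (Real.sqrt 2), gg s := by linarith
  rcases le_or_gt t 1.9 with h16 | h16
  · have hp4 : t^4 ≤ (1.9:ℝ)^4 := pow_le_pow_left₀ ht.le h16 4
    have hQ : (∫ s in Ioi t, gg s) ≤ (81494589/1000000000 : ℝ) := le_trans (I_mono h15.le) hU_1_85
    calc t^4 * (∫ s in Ioi t, gg s) ≤ (1.9:ℝ)^4 * (81494589/1000000000 : ℝ) :=
        mul_le_mul hp4 hQ (I_nonneg t) (by norm_num)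
      _ < 6 * (48546001/250000000 : ℝ) := by norm_num
      _ ≤ 6 * ∫ s in Ioi (Real.sqrt 2), gg s := by linarith
  rcases le_or_gt t 1.95 with h17 | h17
  · have hp4 : t^4 ≤ (1.95:ℝ)^4 := pow_le_pow_left₀ ht.le h17 4
    have hQ : (∫ s in Ioi t, gg s) ≤ (72845893/1000000000 : ℝ) := le_trans (I_mono h16.le) hU_1_9
    calc t^4 * (∫ s in Ioi t, gg s) ≤ (1.95:ℝ)^4 * (72845893/1000000000 : ℝ) :=
        mul_le_mul hp4 hQ (I_nonneg t) (by norm_num)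
      _ < 6 * (48546001/250000000 : ℝ) := by norm_num
      _ ≤ 6 * ∫ s in Ioi (Real.sqrt 2), gg s := by linarith
  rcases le_or_gt t 2 with h18 | h18
  · have hp4 : t^4 ≤ (2:ℝ)^4 := pow_le_pow_left₀ ht.le h18 4
    have hQ : (∫ s in Ioi t, gg s) ≤ (6497827/100000000 : ℝ) := le_trans (I_mono h17.le) hU_1_95
    calc t^4 * (∫ s in Ioi t, gg s) ≤ (2:ℝ)^4 * (6497827/100000000 : ℝ) :=
        mul_le_mul hp4 hQ (I_nonneg t) (by norm_num)
      _ < 6 * (48546001/250000000 : ℝ) := by norm_num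
      _ ≤ 6 * ∫ s in Ioi (Real.sqrt 2), gg s := by linarith
  rcases le_or_gt t 2.05 with h19 | h19
  · have hp4 : t^4 ≤ (2.05:ℝ)^4 := pow_le_pow_left₀ ht.le h19 4
    have hQ : (∫ s in Ioi t, gg s) ≤ (7229857/125000000 : ℝ) := le_trans (I_mono h18.le) hU_2_0
    calc t^4 * (∫ s in Ioi t, gg s) ≤ (2.05:ℝ)^4 * (7229857/125000000 : ℝ) :=
        mul_le_mul hp4 hQ (I_nonneg t) (by norm_num)
      _ < 6 * (48546001/250000000 : ℝ) := by norm_num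
      _ ≤ 6 * ∫ s in Ioi (Real.sqrt 2), gg s := by linarith
  rcases le_or_gt t 2.1 with h20 | h20
  · have hp4 : t^4 ≤ (2.1:ℝ)^4 := pow_le_pow_left₀ ht.le h20 4
    have hQ : (∫ s in Ioi t, gg s) ≤ (51376241/1000000000 : ℝ) := le_trans (I_mono h19.le) hU_2_05
    calc t^4 * (∫ s in Ioi t, gg s) ≤ (2.1:ℝ)^4 * (51376241/1000000000 : ℝ) :=
        mul_le_mul hp4 hQ (I_nonneg t) (by norm_num)
      _ < 6 * (48546001/250000000 : ℝ) := by norm_num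
      _ ≤ 6 * ∫ s in Ioi (Real.sqrt 2), gg s := by linarith
  rcases le_or_gt t 2.15 with h21 | h21
  · have hp4 : t^4 ≤ (2.15:ℝ)^4 := pow_le_pow_left₀ ht.le h21 4
    have hQ : (∫ s in Ioi t, gg s) ≤ (22770349/500000000 : ℝ) := le_trans (I_mono h20.le) hU_2_1
    calc t^4 * (∫ s in Ioi t, gg s) ≤ (2.15:ℝ)^4 * (22770349/500000000 : ℝ) :=
        mul_le_mul hp4 hQ (I_nonneg t) (by norm_num)
      _ < 6 * (48546001/250000000 : ℝ) := by norm_num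
      _ ≤ 6 * ∫ s in Ioi (Real.sqrt 2), gg s := by linarith
  rcases le_or_gt t 2.2 with h22 | h22
  · have hp4 : t^4 ≤ (2.2:ℝ)^4 := pow_le_pow_left₀ ht.le h22 4
    have hQ : (∫ s in Ioi t, gg s) ≤ (40284373/1000000000 : ℝ) := le_trans (I_mono h21.le) hU_2_15
    calc t^4 * (∫ s in Ioi t, gg s) ≤ (2.2:ℝ)^4 * (40284373/1000000000 : ℝ) :=
        mul_le_mul hp4 hQ (I_nonneg t) (by norm_num)
      _ < 6 * (48546001/250000000 : ℝ) := by norm_num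
      _ ≤ 6 * ∫ s in Ioi (Real.sqrt 2), gg s := by linarith
  rcases le_or_gt t 2.25 with h23 | h23
  · have hp4 : t^4 ≤ (2.25:ℝ)^4 := pow_le_pow_left₀ ht.le h23 4
    have hQ : (∫ s in Ioi t, gg s) ≤ (222259/6250000 : ℝ) := le_trans (I_mono h22.le) hU_2_2
    calc t^4 * (∫ s in Ioi t, gg s) ≤ (2.25:ℝ)^4 * (222259/6250000 : ℝ) :=
        mul_le_mul hp4 hQ (I_nonneg t) (by norm_num)
      _ < 6 * (48546001/250000000 : ℝ) := by norm_num
      _ ≤ 6 * ∫ s in Ioi (Real.sqrt 2), gg s := by linarith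
  rcases le_or_gt t 2.3 with h24 | h24
  · have hp4 : t^4 ≤ (2.3:ℝ)^4 := pow_le_pow_left₀ ht.le h24 4
    have hQ : (∫ s in Ioi t, gg s) ≤ (15664111/500000000 : ℝ) := le_trans (I_mono h23.le) hU_2_25
    calc t^4 * (∫ s in Ioi t, gg s) ≤ (2.3:ℝ)^4 * (15664111/500000000 : ℝ) :=
        mul_le_mul hp4 hQ (I_nonneg t) (by norm_num)
      _ < 6 * (48546001/250000000 : ℝ) := by norm_num
      _ ≤ 6 * ∫ s in Ioi (Real.sqrt 2), gg s := by linarith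
  rcases le_or_gt t 2.35 with h25 | h25
  · have hp4 : t^4 ≤ (2.35:ℝ)^4 := pow_le_pow_left₀ ht.le h25 4
    have hQ : (∫ s in Ioi t, gg s) ≤ (27543279/1000000000 : ℝ) := le_trans (I_mono h24.le) hU_2_3
    calc t^4 * (∫ s in Ioi t, gg s) ≤ (2.35:ℝ)^4 * (27543279/1000000000 : ℝ) :=
        mul_le_mul hp4 hQ (I_nonneg t) (by norm_num)
      _ < 6 * (48546001/250000000 : ℝ) := by norm_num
      _ ≤ 6 * ∫ s in Ioi (Real.sqrt 2), gg s := by linarith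
  rcases le_or_gt t 2.4 with h26 | h26
  · have hp4 : t^4 ≤ (2.4:ℝ)^4 := pow_le_pow_left₀ ht.le h26 4
    have hQ : (∫ s in Ioi t, gg s) ≤ (12083731/500000000 : ℝ) := le_trans (I_mono h25.le) hU_2_35
    calc t^4 * (∫ s in Ioi t, gg s) ≤ (2.4:ℝ)^4 * (12083731/500000000 : ℝ) :=
        mul_le_mul hp4 hQ (I_nonneg t) (by norm_num)
      _ < 6 * (48546001/250000000 : ℝ) := by norm_num
      _ ≤ 6 * ∫ s in Ioi (Real.sqrt 2), gg s := by linarith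
  rcases le_or_gt t 2.5 with h27 | h27
  · have hp4 : t^4 ≤ (2.5:ℝ)^4 := pow_le_pow_left₀ ht.le h27 4
    have hQ : (∫ s in Ioi t, gg s) ≤ (5290987/250000000 : ℝ) := le_trans (I_mono h26.le) hU_2_4
    calc t^4 * (∫ s in Ioi t, gg s) ≤ (2.5:ℝ)^4 * (5290987/250000000 : ℝ) :=
        mul_le_mul hp4 hQ (I_nonneg t) (by norm_num)
      _ < 6 * (48546001/250000000 : ℝ) := by norm_num
      _ ≤ 6 * ∫ s in Ioi (Real.sqrt 2), gg s := by linarith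
  rcases le_or_gt t 2.6 with h28 | h28
  · have hp4 : t^4 ≤ (2.6:ℝ)^4 := pow_le_pow_left₀ ht.le h28 4
    have hQ : (∫ s in Ioi t, gg s) ≤ (1613289/100000000 : ℝ) := le_trans (I_mono h27.le) hU_2_5
    calc t^4 * (∫ s in Ioi t, gg s) ≤ (2.6:ℝ)^4 * (1613289/100000000 : ℝ) :=
        mul_le_mul hp4 hQ (I_nonneg t) (by norm_num)
      _ < 6 * (48546001/250000000 : ℝ) := by norm_num
      _ ≤ 6 * ∫ s in Ioi (Real.sqrt 2), gg s := by linarith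
  rcases le_or_gt t 2.7 with h29 | h29
  · have hp4 : t^4 ≤ (2.7:ℝ)^4 := pow_le_pow_left₀ ht.le h29 4
    have hQ : (∫ s in Ioi t, gg s) ≤ (12207471/1000000000 : ℝ) := le_trans (I_mono h28.le) hU_2_6
    calc t^4 * (∫ s in Ioi t, gg s) ≤ (2.7:ℝ)^4 * (12207471/1000000000 : ℝ) :=
        mul_le_mul hp4 hQ (I_nonneg t) (by norm_num)
      _ < 6 * (48546001/250000000 : ℝ) := by norm_num
      _ ≤ 6 * ∫ s in Ioi (Real.sqrt 2), gg s := by linarith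
  rcases le_or_gt t 2.8 with h30 | h30
  · have hp4 : t^4 ≤ (2.8:ℝ)^4 := pow_le_pow_left₀ ht.le h30 4
    have hQ : (∫ s in Ioi t, gg s) ≤ (4587279/500000000 : ℝ) := le_trans (I_mono h29.le) hU_2_7
    calc t^4 * (∫ s in Ioi t, gg s) ≤ (2.8:ℝ)^4 * (4587279/500000000 : ℝ) :=
        mul_le_mul hp4 hQ (I_nonneg t) (by norm_num)
      _ < 6 * (48546001/250000000 : ℝ) := by norm_num
      _ ≤ 6 * ∫ s in Ioi (Real.sqrt 2), gg s := by linarith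
  rcases le_or_gt t 2.9 with h31 | h31
  · have hp4 : t^4 ≤ (2.9:ℝ)^4 := pow_le_pow_left₀ ht.le h31 4
    have hQ : (∫ s in Ioi t, gg s) ≤ (274161/40000000 : ℝ) := le_trans (I_mono h30.le) hU_2_8
    calc t^4 * (∫ s in Ioi t, gg s) ≤ (2.9:ℝ)^4 * (274161/40000000 : ℝ) :=
        mul_le_mul hp4 hQ (I_nonneg t) (by norm_num)
      _ < 6 * (48546001/250000000 : ℝ) := by norm_num
      _ ≤ 6 * ∫ s in Ioi (Real.sqrt 2), gg s := by linarith
  rcases le_or_gt t 3 with h32 | h32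
  · have hp4 : t^4 ≤ (3:ℝ)^4 := pow_le_pow_left₀ ht.le h32 4
    have hQ : (∫ s in Ioi t, gg s) ≤ (5095791/1000000000 : ℝ) := le_trans (I_mono h31.le) hU_2_9
    calc t^4 * (∫ s in Ioi t, gg s) ≤ (3:ℝ)^4 * (5095791/1000000000 : ℝ) :=
        mul_le_mul hp4 hQ (I_nonneg t) (by norm_num)
      _ < 6 * (48546001/250000000 : ℝ) := by norm_num
      _ ≤ 6 * ∫ s in Ioi (Real.sqrt 2), gg s := by linarith
  rcases le_or_gt t 3.5 with h33 | h33
  · have hp4 : t^4 ≤ (3.5:ℝ)^4 := pow_le_pow_left₀ ht.le h33 4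
    have hQ : (∫ s in Ioi t, gg s) ≤ (1888261/500000000 : ℝ) := le_trans (I_mono h32.le) hU_3
    calc t^4 * (∫ s in Ioi t, gg s) ≤ (3.5:ℝ)^4 * (1888261/500000000 : ℝ) :=
        mul_le_mul hp4 hQ (I_nonneg t) (by norm_num)
      _ < 6 * (48546001/250000000 : ℝ) := by norm_num
      _ ≤ 6 * ∫ s in Ioi (Real.sqrt 2), gg s := by linarith
  rcases le_or_gt t 4 with h34 | h34
  · have hp4 : t^4 ≤ (4:ℝ)^4 := pow_le_pow_left₀ ht.le h34 4
    have hQ : (∫ s in Ioi t, gg s) ≤ (162033/250000000 : ℝ) := le_trans (I_mono h33.le) hU_3_5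
    calc t^4 * (∫ s in Ioi t, gg s) ≤ (4:ℝ)^4 * (162033/250000000 : ℝ) :=
        mul_le_mul hp4 hQ (I_nonneg t) (by norm_num)
      _ < 6 * (48546001/250000000 : ℝ) := by norm_num
      _ ≤ 6 * ∫ s in Ioi (Real.sqrt 2), gg s := by linarith
  rcases le_or_gt t 4.5 with h35 | h35
  · have hp4 : t^4 ≤ (4.5:ℝ)^4 := pow_le_pow_left₀ ht.le h35 4
    have hQ : (∫ s in Ioi t, gg s) ≤ (44609/500000000 : ℝ) := le_trans (I_mono h34.le) hU_4_0
    calc t^4 * (∫ s in Ioi t, gg s) ≤ (4.5:ℝ)^4 * (44609/500000000 : ℝ) :=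
        mul_le_mul hp4 hQ (I_nonneg t) (by norm_num)
      _ < 6 * (48546001/250000000 : ℝ) := by norm_num
      _ ≤ 6 * ∫ s in Ioi (Real.sqrt 2), gg s := by linarith
  rcases le_or_gt t 5 with h36 | h36
  · have hp4 : t^4 ≤ (5:ℝ)^4 := pow_le_pow_left₀ ht.le h36 4
    have hQ : (∫ s in Ioi t, gg s) ≤ (9829/1000000000 : ℝ) := le_trans (I_mono h35.le) hU_4_5
    calc t^4 * (∫ s in Ioi t, gg s) ≤ (5:ℝ)^4 * (9829/1000000000 : ℝ) :=
        mul_le_mul hp4 hQ (I_nonneg t) (by norm_num)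
      _ < 6 * (48546001/250000000 : ℝ) := by norm_num
      _ ≤ 6 * ∫ s in Ioi (Real.sqrt 2), gg s := by linarith
  rcases le_or_gt t 5.5 with h37 | h37
  · have hp4 : t^4 ≤ (5.5:ℝ)^4 := pow_le_pow_left₀ ht.le h37 4
    have hQ : (∫ s in Ioi t, gg s) ≤ (867/1000000000 : ℝ) := le_trans (I_mono h36.le) hU_5_0
    calc t^4 * (∫ s in Ioi t, gg s) ≤ (5.5:ℝ)^4 * (867/1000000000 : ℝ) :=
        mul_le_mul hp4 hQ (I_nonneg t) (by norm_num)
      _ < 6 * (48546001/250000000 : ℝ) := by norm_num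
      _ ≤ 6 * ∫ s in Ioi (Real.sqrt 2), gg s := by linarith
  · -- t > 5.5
    have hQ := mill (show (0:ℝ) < t by linarith)
    have he : Real.exp (-t^2/2) ≤ 12^6 / t^12 := by
      have h1 : t^2/12 ≤ Real.exp (t^2/12) := by linarith [Real.add_one_le_exp (t^2/12)]
      have h2 : (t^2/12)^6 ≤ Real.exp (t^2/2) := by
        calc (t^2/12)^6 ≤ (Real.exp (t^2/12))^6 := pow_le_pow_left₀ (by positivity) h1 6
          _ = Real.exp (6*(t^2/12)) := by rw [← Real.exp_nat_mul]; norm_num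
          _ = Real.exp (t^2/2) := by ring_nf
      rw [show -t^2/2 = -(t^2/2) by ring, Real.exp_neg]
      rw [show (12:ℝ)^6 / t^12 = (((t^2/12)^6))⁻¹ by field_simp]
      exact inv_anti₀ (by positivity) h2
    have ht9 : (5.5:ℝ)^9 ≤ t^9 := pow_le_pow_left₀ (by norm_num) h37.le 9
    have htp : (0:ℝ) < t := ht
    calc t^4 * (∫ s in Ioi t, gg s) ≤ t^4 * (Real.exp (-t^2/2) * t⁻¹) := by
          apply mul_le_mul_of_nonneg_left hQ (by positivity)
      _ ≤ t^4 * ((12^6 / t^12) * t⁻¹) := by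
          apply mul_le_mul_of_nonneg_left (mul_le_mul_of_nonneg_right he (by positivity)) (by positivity)
      _ = 12^6 / t^9 := by field_simp
      _ ≤ 12^6 / 5.5^9 := by
          apply div_le_div_of_nonneg_left (by norm_num) (by positivity) ht9
      _ < 6 * (48546001/250000000 : ℝ) := by norm_num
      _ ≤ 6 * ∫ s in Ioi (Real.sqrt 2), gg s := by linarith

lemma cdf_rel (y : ℝ) :
    1 - normalCDF y = (Real.sqrt (2*π))⁻¹ * ∫ s in Ioi y, gg s := by
  have hpos : (0:ℝ) < Real.sqrt (2*π) := Real.sqrt_pos.mpr (by positivity)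
  have h1 : normalCDF y = (Real.sqrt (2*π))⁻¹ * ∫ s in Iic y, gg s := by
    unfold normalCDF gg
    exact integral_const_mul _ _
  have h2 : (∫ s in Iic y, gg s) + ∫ s in Ioi y, gg s = Real.sqrt (2*π) := by
    rw [intervalIntegral.integral_Iic_add_Ioi gg_int.integrableOn gg_int.integrableOn, gg_total]
  have h3 : (Real.sqrt (2*π))⁻¹ * ((∫ s in Iic y, gg s) + ∫ s in Ioi y, gg s) = 1 := by
    rw [h2]; exact inv_mul_cancel₀ hpos.ne'
  rw [mul_add] at h3
  rw [h1]
  linarith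

end Stmt3Aux

open Stmt3Aux MeasureTheory Set in
theorem stmt_3 (x : ℝ) (hx : 0 < x) :
    (1/2) * (1 - (1/2) * (1 - normalCDF ((Real.sqrt x)⁻¹)) / (1 - normalCDF (Real.sqrt 2))) >
      (1/2) * (1 - 3 * x ^ 2) := by
  have hsx : 0 < Real.sqrt x := Real.sqrt_pos.mpr hx
  have ht : 0 < (Real.sqrt x)⁻¹ := inv_pos.mpr hsx
  have hcpos : (0:ℝ) < (Real.sqrt (2*π))⁻¹ := by
    have : (0:ℝ) < Real.sqrt (2*π) := Real.sqrt_pos.mpr (by positivity)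
    exact inv_pos.mpr this
  have hCpos : (0:ℝ) < ∫ s in Ioi (Real.sqrt 2), gg s := lt_of_lt_of_le (by norm_num) C_lb
  have hkey := key _ ht
  have ht4 : ((Real.sqrt x)⁻¹)^4 = (x^2)⁻¹ := by
    rw [inv_pow, show (4:ℕ) = 2*2 from rfl, pow_mul, Real.sq_sqrt hx.le]
  rw [ht4] at hkey
  have hx2 : (0:ℝ) < x^2 := by positivity
  have hQ0 : (0:ℝ) ≤ ∫ s in Ioi (Real.sqrt x)⁻¹, gg s := I_nonneg _
  have hQlt : (∫ s in Ioi (Real.sqrt x)⁻¹, gg s) < 6 * x^2 * (∫ s in Ioi (Real.sqrt 2), gg s) := by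
    calc (∫ s in Ioi (Real.sqrt x)⁻¹, gg s)
        = ((x^2)⁻¹ * ∫ s in Ioi (Real.sqrt x)⁻¹, gg s) * x^2 := by field_simp
      _ < (6 * ∫ s in Ioi (Real.sqrt 2), gg s) * x^2 := by
          exact mul_lt_mul_of_pos_right hkey hx2
      _ = 6 * x^2 * (∫ s in Ioi (Real.sqrt 2), gg s) := by ring
  rw [cdf_rel ((Real.sqrt x)⁻¹), cdf_rel (Real.sqrt 2)]
  rw [mul_div_assoc, mul_div_mul_left _ _ (ne_of_gt hcpos)]
  have h5 : (∫ s in Ioi (Real.sqrt x)⁻¹, gg s) / (∫ s in Ioi (Real.sqrt 2), gg s) < 6 * x^2 := by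
    rw [div_lt_iff₀ hCpos]
    calc (∫ s in Ioi (Real.sqrt x)⁻¹, gg s)
        < 6 * x^2 * (∫ s in Ioi (Real.sqrt 2), gg s) := hQlt
      _ = 6 * x ^ 2 * ∫ (s : ℝ) in Ioi √2, gg s := by ring
  rw [gt_iff_lt]
  linarith [h5]
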